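/- Let α and β be distinct irrational real numbers, and let G and H be additive subgroups of ℚ with 1 ∈ G. If there exists a bijective additive group homomorphism θ : G + αH → G + βH with θ(1) = 1 such that for all x, y ∈ G + αH, x ≤ y if and only if θ(x) ≤ θ(y), then G + αH = G + βH as subsets of ℝ. -/
import Mathlib


/-- The additive subgroup `G + αH` of `ℝ`, for additive subgroups `G, H` of `ℚ` and a
real number `α`. -/
def mixSubgroup (G H : AddSubgroup ℚ) (α : ℝ) : AddSubgroup ℝ where
  carrier := {x : ℝ | ∃ g ∈ G, ∃ h ∈ H, x = (g : ℝ) + α * (h : ℝ)}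
  zero_mem' := ⟨0, G.zero_mem, 0, H.zero_mem, by simp⟩
  add_mem' := by
    rintro x y ⟨g1, hg1, h1, hh1, rfl⟩ ⟨g2, hg2, h2, hh2, rfl⟩
    exact ⟨g1 + g2, G.add_mem hg1 hg2, h1 + h2, H.add_mem hh1 hh2, by push_cast; ring⟩
  neg_mem' := by
    rintro x ⟨g, hg, h, hh, rfl⟩
    exact ⟨-g, G.neg_mem hg, -h, H.neg_mem hh, by push_cast; ring⟩

theorem one_mem_mixSubgroup (G H : AddSubgroup ℚ) (α : ℝ) (h1G : (1 : ℚ) ∈ G) :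
    (1 : ℝ) ∈ mixSubgroup G H α :=
  ⟨1, h1G, 0, H.zero_mem, by simp⟩

/-- Lemma 4.4: Let `α ≠ β` be irrational numbers, and `G, H` additive
subgroups of `ℚ` with `1 ∈ G`. If there is a bijective additive group homomorphism
`θ : G + αH → G + βH` with `θ(1) = 1` such that `x ≤ y ↔ θ(x) ≤ θ(y)` for all
`x, y ∈ G + αH`, then `G + αH = G + βH` (as subsets of `ℝ`). -/
theorem mixSubgroup_eq_of_orderIso
    (α β : ℝ) (hα : Irrational α) (hβ : Irrational β) (hαβ : α ≠ β)
    (G H : AddSubgroup ℚ) (h1G : (1 : ℚ) ∈ G)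
    (θ : mixSubgroup G H α →+ mixSubgroup G H β)
    (hbij : Function.Bijective θ)
    (hθ1 : θ ⟨1, one_mem_mixSubgroup G H α h1G⟩ = ⟨1, one_mem_mixSubgroup G H β h1G⟩)
    (horder : ∀ x y : mixSubgroup G H α, (x : ℝ) ≤ (y : ℝ) ↔ (θ x : ℝ) ≤ (θ y : ℝ)) :
    (mixSubgroup G H α : Set ℝ) = (mixSubgroup G H β : Set ℝ) := by
  have key : ∀ x : mixSubgroup G H α, (θ x : ℝ) = (x : ℝ) := by
    intro x
    have main : ∀ q : ℚ, ((x : ℝ) ≤ q ↔ (θ x : ℝ) ≤ q) := by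
      intro q
      have hden : (0:ℝ) < (q.den : ℝ) := by positivity
      have hcast : (q : ℝ) = (q.num : ℝ) / (q.den : ℝ) := by
        rw [Rat.cast_def]
      have h2 := horder ((q.den : ℤ) • x) (q.num • ⟨1, one_mem_mixSubgroup G H α h1G⟩)
      have e1 : (((q.den : ℤ) • x : mixSubgroup G H α) : ℝ) = (q.den : ℝ) * (x : ℝ) := by
        push_cast [zsmul_eq_mul]; ring
      have e2 : ((q.num • (⟨1, one_mem_mixSubgroup G H α h1G⟩ : mixSubgroup G H α) :
          mixSubgroup G H α) : ℝ) = (q.num : ℝ) := by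
        push_cast [zsmul_eq_mul]; ring
      have e3 : ((θ ((q.den : ℤ) • x) : mixSubgroup G H β) : ℝ) = (q.den : ℝ) * (θ x : ℝ) := by
        rw [map_zsmul]; push_cast [zsmul_eq_mul]; ring
      have e4 : ((θ (q.num • ⟨1, one_mem_mixSubgroup G H α h1G⟩) : mixSubgroup G H β) : ℝ)
          = (q.num : ℝ) := by
        rw [map_zsmul, hθ1]; push_cast [zsmul_eq_mul]; ring
      rw [e1, e2, e3, e4] at h2
      rw [hcast, le_div_iff₀ hden, le_div_iff₀ hden, mul_comm (x:ℝ), mul_comm ((θ x : ℝ))]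
      exact h2
    rcases lt_trichotomy ((θ x : ℝ)) ((x : ℝ)) with h | h | h
    · obtain ⟨q, hq1, hq2⟩ := exists_rat_btwn h
      exact absurd ((main q).mpr hq1.le) (not_le.mpr hq2)
    · exact h
    · obtain ⟨q, hq1, hq2⟩ := exists_rat_btwn h
      exact absurd hq2 (not_lt.mpr ((main q).mp hq1.le))
  ext y
  constructor
  · intro hy
    have := (θ ⟨y, hy⟩).2
    rwa [key ⟨y, hy⟩] at this
  · intro hy
    obtain ⟨x, hx⟩ := hbij.2 ⟨y, hy⟩
    have h5 : (θ x : ℝ) = y := by rw [hx]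
    rw [key x] at h5
    rw [← h5]
    exact x.2
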